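/- If a directed path in G_S goes from the all-zero matrix to the all-one matrix, then the set P of cells labeling its edges is a valid placement contained in S: P has exactly one cell in each column (since counts increase by one per edge), exactly one cell in each row (since each matrix coefficient is changed exactly once from 0 to 1), and exactly one cell in each a×b block (by the almost-balance condition on intermediate matrices). -/

import Mathlib

/-- Number of nonzero (true) entries in row `i` of a 0-1 matrix. -/
def rowCount {a b : ℕ} (M : Fin a → Fin b → Bool) (i : Fin a) : ℕ :=
  (Finset.univ.filter (fun j => M i j = true)).card

/-- A 0-1 matrix is almost balanced if every two rows have numbers of
nonzeros differing by at most one. -/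
def AlmostBalanced {a b : ℕ} (M : Fin a → Fin b → Bool) : Prop :=
  ∀ i i' : Fin a, rowCount M i ≤ rowCount M i' + 1
/-- Total number of ones ("count") of a 0-1 matrix. -/
def mcount {a b : ℕ} (M : Fin b → Fin a → Bool) : ℕ :=
  (Finset.univ.filter (fun p : Fin b × Fin a => M p.1 p.2 = true)).card

/-- Grid row corresponding to matrix coefficient `(j, k)`: the `k`-th row in
the `j`-th group of `a` consecutive grid rows. -/
def rowIdx (a b : ℕ) (j : Fin b) (k : Fin a) : Fin (a*b) :=
  ⟨j.val * a + k.val, by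
    have hj := j.isLt; have hk := k.isLt
    have h1 : j.val * a + k.val < (j.val + 1) * a := by
      have : (j.val + 1) * a = j.val * a + a := by ring
      omega
    have h2 : (j.val + 1) * a ≤ b * a := Nat.mul_le_mul_right a hj
    have h3 : a * b = b * a := Nat.mul_comm a b
    omega⟩

/-- Arcs of the graph `G_S` on almost-balanced `b × a` 0-1 matrices: `B` differs
from `A` only by changing coefficient `(j,k)` (grid row `rowIdx a b j k`) from 0
to 1, the count of `B` equals the (1-indexed) column `c.val + 1`, and the cell
`(rowIdx a b j k, c)` belongs to `S`. -/
def GEdge (a b : ℕ) (S : Finset (Fin (a*b) × Fin (a*b)))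
    (A B : Fin b → Fin a → Bool) : Prop :=
  AlmostBalanced A ∧ AlmostBalanced B ∧
  ∃ (j : Fin b) (k : Fin a) (c : Fin (a*b)),
    A j k = false ∧ B j k = true ∧
    (∀ (j' : Fin b) (k' : Fin a), (j', k') ≠ (j, k) → A j' k' = B j' k') ∧
    mcount B = c.val + 1 ∧ (rowIdx a b j k, c) ∈ S
/-- A valid placement on the `ab × ab` Sudoku grid with `a × b` blocks:
exactly one cell in each row, each column, and each block. -/
def IsValidPlacement (a b : ℕ) (P : Finset (Fin (a*b) × Fin (a*b))) : Prop :=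
  (∀ r : Fin (a*b), (P.filter (fun p => p.1 = r)).card = 1) ∧
  (∀ c : Fin (a*b), (P.filter (fun p => p.2 = c)).card = 1) ∧
  (∀ (i : Fin b) (j : Fin a),
    (P.filter (fun p => p.1.val / a = i.val ∧ p.2.val / b = j.val)).card = 1)

section helpers
variable {a b : ℕ}

lemma mul_add_div_eq (ha : 0 < a) (j k : ℕ) (hk : k < a) : (j * a + k) / a = j := by
  rw [mul_comm, Nat.mul_add_div ha, Nat.div_eq_of_lt hk, add_zero]

lemma mcount_flip {A B : Fin b → Fin a → Bool} {j : Fin b} {k : Fin a}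
    (hA : A j k = false) (hB : B j k = true)
    (hoth : ∀ j' k', (j', k') ≠ (j, k) → A j' k' = B j' k') :
    mcount B = mcount A + 1 := by
  classical
  unfold mcount
  have hset : Finset.univ.filter (fun p : Fin b × Fin a => B p.1 p.2 = true)
      = insert (j, k) (Finset.univ.filter (fun p : Fin b × Fin a => A p.1 p.2 = true)) := by
    ext ⟨j', k'⟩
    simp only [Finset.mem_filter, Finset.mem_insert, Finset.mem_univ, true_and, Prod.mk.injEq]
    by_cases h : (j', k') = (j, k)
    · obtain ⟨h1, h2⟩ := Prod.mk.injEq .. ▸ h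
      subst h1; subst h2
      simp [hB]
    · have he := hoth j' k' h
      rw [Prod.mk.injEq] at h
      constructor
      · intro hb'; right; rw [he]; exact hb'
      · rintro (⟨h1, h2⟩ | hb')
        · exact absurd ⟨h1, h2⟩ h
        · rw [he] at hb'; exact hb'
  rw [hset, Finset.card_insert_of_notMem]
  simp [hA]

lemma rowCount_flip_same {A B : Fin b → Fin a → Bool} {j : Fin b} {k : Fin a}
    (hA : A j k = false) (hB : B j k = true)
    (hoth : ∀ j' k', (j', k') ≠ (j, k) → A j' k' = B j' k') :
    rowCount B j = rowCount A j + 1 := by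
  classical
  unfold rowCount
  have hset : Finset.univ.filter (fun k' => B j k' = true)
      = insert k (Finset.univ.filter (fun k' => A j k' = true)) := by
    ext k'
    simp only [Finset.mem_filter, Finset.mem_insert, Finset.mem_univ, true_and]
    by_cases h : k' = k
    · subst h; simp [hB]
    · have he := hoth j k' (by simp [h])
      constructor
      · intro hb'; right; rw [he]; exact hb'
      · rintro (h1 | hb')
        · exact absurd h1 h
        · rw [he] at hb'; exact hb'
  rw [hset, Finset.card_insert_of_notMem]
  simp [hA]

lemma rowCount_flip_other {A B : Fin b → Fin a → Bool} {j : Fin b} {k : Fin a}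
    (hoth : ∀ j' k', (j', k') ≠ (j, k) → A j' k' = B j' k')
    {i : Fin b} (hij : i ≠ j) : rowCount B i = rowCount A i := by
  classical
  unfold rowCount
  congr 1
  apply Finset.filter_congr
  intro k' _
  rw [hoth i k' (by simp [hij])]

lemma mcount_eq_sum (M : Fin b → Fin a → Bool) : mcount M = ∑ j, rowCount M j := by
  classical
  rw [mcount, Finset.card_filter, Fintype.sum_prod_type]
  exact Finset.sum_congr rfl (fun j _ => by rw [rowCount, Finset.card_filter])

lemma mcount_top : mcount (fun _ _ => true : Fin b → Fin a → Bool) = b * a := by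
  simp [mcount]

lemma mcount_bot : mcount (fun _ _ => false : Fin b → Fin a → Bool) = 0 := by
  simp [mcount]

lemma flipped_row_count (hb : 0 < b) {A B : Fin b → Fin a → Bool} {j : Fin b} {k : Fin a}
    (hABal : AlmostBalanced A) (hBBal : AlmostBalanced B)
    (hA : A j k = false) (hB : B j k = true)
    (hoth : ∀ j' k', (j', k') ≠ (j, k) → A j' k' = B j' k') :
    rowCount A j = mcount A / b := by
  classical
  set q := rowCount A j with hq
  have hBj : rowCount B j = q + 1 := rowCount_flip_same hA hB hoth
  have hmin : ∀ i : Fin b, q ≤ rowCount A i := by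
    intro i
    by_cases hij : i = j
    · subst hij; exact le_refl _
    · have h1 := hBBal j i
      rw [hBj, rowCount_flip_other hoth hij] at h1
      omega
  have hmax : ∀ i : Fin b, rowCount A i ≤ q + 1 := fun i => hABal i j
  have hsum : mcount A = ∑ i, rowCount A i := mcount_eq_sum A
  have hlow : b * q ≤ mcount A := by
    rw [hsum]
    calc b * q = (Finset.univ : Finset (Fin b)).card • q := by
          simp [Finset.card_univ, smul_eq_mul]
    _ ≤ ∑ i, rowCount A i := Finset.card_nsmul_le_sum _ _ _ (fun i _ => hmin i)
  have hhigh : mcount A < b * q + b := by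
    have hsplit : rowCount A j + ∑ i ∈ Finset.univ.erase j, rowCount A i
        = ∑ i, rowCount A i := Finset.add_sum_erase Finset.univ (fun i => rowCount A i) (Finset.mem_univ j)
    have herase : ∑ i ∈ Finset.univ.erase j, rowCount A i ≤ (b - 1) * (q + 1) := by
      calc ∑ i ∈ Finset.univ.erase j, rowCount A i
          ≤ (Finset.univ.erase j).card • (q + 1) :=
            Finset.sum_le_card_nsmul _ _ _ (fun i _ => hmax i)
      _ = (b - 1) * (q + 1) := by
            rw [Finset.card_erase_of_mem (Finset.mem_univ j)]
            simp [Finset.card_univ, smul_eq_mul]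
    have hexp : (b - 1) * (q + 1) + (q + 1) = b * (q + 1) := by
      have : b - 1 + 1 = b := Nat.succ_pred_eq_of_pos hb
      calc (b - 1) * (q + 1) + (q + 1) = (b - 1 + 1) * (q + 1) := by ring
      _ = b * (q + 1) := by rw [this]
    have : b * (q + 1) = b * q + b := by ring
    omega
  symm
  apply Nat.div_eq_of_lt_le
  · rw [mul_comm]; exact hlow
  · rw [mul_comm]
    have hbq : b * (q + 1) = b * q + b := by ring
    omega

lemma rowCount_mono {M N : Fin b → Fin a → Bool} (i : Fin b)
    (h : ∀ k, M i k = true → N i k = true) : rowCount M i ≤ rowCount N i := by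
  classical
  apply Finset.card_le_card
  intro k hk
  simp only [Finset.mem_filter, Finset.mem_univ, true_and] at *
  exact h k hk

end helpers

lemma rowIdx_val_div (ha : 0 < a) {b : ℕ} (j : Fin b) (k : Fin a) :
    (rowIdx a b j k).val / a = j.val :=
  mul_add_div_eq ha _ _ k.isLt

lemma rowIdx_inj (ha : 0 < a) {b : ℕ} {j j' : Fin b} {k k' : Fin a}
    (h : rowIdx a b j k = rowIdx a b j' k') : j = j' ∧ k = k' := by
  have hv : j.val * a + k.val = j'.val * a + k'.val := congrArg Fin.val h
  have h1 : j.val = j'.val := by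
    have e1 := mul_add_div_eq ha j.val k.val k.isLt
    have e2 := mul_add_div_eq ha j'.val k'.val k'.isLt
    rw [← e1, ← e2, hv]
  have h2 : j.val * a = j'.val * a := by rw [h1]
  exact ⟨Fin.ext h1, Fin.ext (by omega)⟩

theorem path_gives_placement (a b : ℕ) (ha : 0 < a) (hb : 0 < b)
    (S : Finset (Fin (a*b) × Fin (a*b))) (l : List (Fin b → Fin a → Bool))
    (hchain : l.Chain' (GEdge a b S))
    (hhead : l.head? = some (fun _ _ => false))
    (hlast : l.getLast? = some (fun _ _ => true))
    (P : Finset (Fin (a*b) × Fin (a*b)))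
    (hP : ∀ p : Fin (a*b) × Fin (a*b), p ∈ P ↔
      ∃ (i : ℕ) (h : i + 1 < l.length) (j : Fin b) (k : Fin a),
        (l.get ⟨i, by omega⟩) j k = false ∧ (l.get ⟨i+1, h⟩) j k = true ∧
        p.1 = rowIdx a b j k ∧ p.2.val + 1 = mcount (l.get ⟨i+1, h⟩)) :
    IsValidPlacement a b P ∧ ∀ p ∈ P, p ∈ S := by
  classical
  have hne : l ≠ [] := by
    intro h; rw [h] at hhead; simp at hhead
  set n := l.length with hnl
  have hnpos : 0 < n := List.length_pos_iff.mpr hne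
  -- first element is all-false
  have h0 : ∀ (h : 0 < n), l.get ⟨0, h⟩ = (fun _ _ => false) := by
    intro h
    have hh := List.head?_eq_some_head hne
    rw [hh] at hhead
    have he : l.head hne = l.get ⟨0, h⟩ := (List.get_mk_zero h).symm
    rw [← he]
    exact Option.some.inj hhead
  -- edges
  have hedge : ∀ (i : ℕ) (h1 : i < n) (h2 : i + 1 < n),
      GEdge a b S (l.get ⟨i, h1⟩) (l.get ⟨i + 1, h2⟩) := by
    intro i h1 h2
    exact List.isChain_iff_getElem.mp hchain i (by omega)
  -- counts along the path
  have hmc : ∀ (i : ℕ) (h : i < n), mcount (l.get ⟨i, h⟩) = i := by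
    intro i
    induction i with
    | zero => intro h; rw [h0 h]; exact mcount_bot
    | succ i ih =>
      intro h
      have h1 : i < n := by omega
      obtain ⟨_, _, j, k, c, hA, hB, hoth, hc, hSmem⟩ := hedge i h1 h
      rw [mcount_flip hA hB hoth, ih h1]
  -- length of the path
  have hlen : n = a * b + 1 := by
    have h1 := hmc (n - 1) (by omega)
    have h2 : l.get ⟨n - 1, by omega⟩ = (fun _ _ => true) := by
      have hg := List.getLast?_eq_some_getLast hne
      rw [hg] at hlast
      have hgl := List.getLast_eq_getElem hne
      rw [hgl] at hlast
      exact Option.some.inj hlast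
    rw [h2, mcount_top] at h1
    have hba : b * a = a * b := Nat.mul_comm b a
    omega
  -- monotonicity of entries along the path
  have hmono : ∀ (j : Fin b) (k : Fin a) (i i' : ℕ) (hii : i ≤ i') (h' : i' < n),
      l.get ⟨i, by omega⟩ j k = true → l.get ⟨i', h'⟩ j k = true := by
    intro j k i i' hii
    induction i', hii using Nat.le_induction with
    | base => intro h' ht; exact ht
    | succ m hm ih =>
      intro h' ht
      have hm' : m < n := by omega
      obtain ⟨_, _, j0, k0, c, hA, hB, hoth, hc, hS0⟩ := hedge m hm' h'
      by_cases hjk : ((j, k) : Fin b × Fin a) = (j0, k0)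
      · rw [Prod.mk.injEq] at hjk
        obtain ⟨e1, e2⟩ := hjk
        subst e1; subst e2
        exact hB
      · rw [← hoth j k hjk]
        exact ih hm' ht
  have hrmono : ∀ (i0 : Fin b) (i i' : ℕ) (hii : i ≤ i') (h' : i' < n),
      rowCount (l.get ⟨i, by omega⟩) i0 ≤ rowCount (l.get ⟨i', h'⟩) i0 := by
    intro i0 i i' hii h'
    exact rowCount_mono i0 (fun k hk => hmono i0 k i i' hii h' hk)
  -- the flipped coefficient at each step
  have hflip : ∀ (m : ℕ) (hm : m < a * b), ∃ p : Fin b × Fin a,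
      l.get ⟨m, by omega⟩ p.1 p.2 = false ∧ l.get ⟨m + 1, by omega⟩ p.1 p.2 = true := by
    intro m hm
    have h1 : m < n := by omega
    have h2 : m + 1 < n := by omega
    obtain ⟨_, _, j, k, c, hA, hB, hoth, hc, hS0⟩ := hedge m h1 h2
    exact ⟨(j, k), hA, hB⟩
  choose F hF1 hF2 using hflip
  -- uniqueness of the flipped coefficient
  have huniq : ∀ (m : ℕ) (hm : m < a * b) (h1 : m < n) (h2 : m + 1 < n) (j : Fin b) (k : Fin a),
      l.get ⟨m, h1⟩ j k = false → l.get ⟨m + 1, h2⟩ j k = true → (j, k) = F m hm := by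
    intro m hm h1 h2 j k hf ht
    obtain ⟨_, _, j0, k0, c, hA, hB, hoth, hc, hS0⟩ := hedge m h1 h2
    have e1 : ((j, k) : Fin b × Fin a) = (j0, k0) := by
      by_contra hne'
      rw [hoth j k hne'] at hf
      rw [hf] at ht
      exact Bool.false_ne_true ht
    have e2 : F m hm = (j0, k0) := by
      by_contra hne'
      have hne'' : (((F m hm).1, (F m hm).2) : Fin b × Fin a) ≠ (j0, k0) := by
        rw [Prod.mk.eta]; exact hne'
      have hf' := hF1 m hm
      have ht' := hF2 m hm
      rw [hoth _ _ hne''] at hf'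
      rw [hf'] at ht'
      exact Bool.false_ne_true ht'
    rw [e1, ← e2]
  -- flipped coefficients at different steps differ
  have hFne : ∀ (m m' : ℕ) (hm : m < a * b) (hm' : m' < a * b), m < m' →
      F m hm ≠ F m' hm' := by
    intro m m' hm hm' hlt heq
    have h2 : m + 1 ≤ m' := by omega
    have h1' : m' < n := by omega
    have ht : l.get ⟨m', h1'⟩ (F m hm).1 (F m hm).2 = true :=
      hmono _ _ (m + 1) m' h2 h1' (hF2 m hm)
    have hf : l.get ⟨m', h1'⟩ (F m' hm').1 (F m' hm').2 = false := hF1 m' hm'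
    rw [heq] at ht
    rw [ht] at hf
    simp at hf
  -- row count of the flipped row
  have hrc : ∀ (m : ℕ) (hm : m < a * b) (h1 : m < n),
      rowCount (l.get ⟨m, h1⟩) (F m hm).1 = m / b := by
    intro m hm h1
    have h2 : m + 1 < n := by omega
    obtain ⟨hABal, hBBal, j0, k0, c, hA, hB, hoth, hc, hS0⟩ := hedge m h1 h2
    have e : ((j0, k0) : Fin b × Fin a) = F m hm := huniq m hm h1 h2 j0 k0 hA hB
    have hfr := flipped_row_count hb hABal hBBal hA hB hoth
    rw [hmc m h1] at hfr
    have ej : (F m hm).1 = j0 := (congrArg Prod.fst e).symm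
    rw [ej]
    exact hfr
  have hrc1 : ∀ (m : ℕ) (hm : m < a * b) (h2 : m + 1 < n),
      rowCount (l.get ⟨m + 1, h2⟩) (F m hm).1 = m / b + 1 := by
    intro m hm h2
    have h1 : m < n := by omega
    obtain ⟨hABal, hBBal, j0, k0, c, hA, hB, hoth, hc, hS0⟩ := hedge m h1 h2
    have e : ((j0, k0) : Fin b × Fin a) = F m hm := huniq m hm h1 h2 j0 k0 hA hB
    have hfs := rowCount_flip_same hA hB hoth
    have hfr := hrc m hm h1
    have ej : (F m hm).1 = j0 := (congrArg Prod.fst e).symm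
    rw [ej] at hfr ⊢
    rw [hfs, hfr]
  -- distinct steps in the same count-segment flip different rows
  have hkey : ∀ (m m' : ℕ) (hm : m < a * b) (hm' : m' < a * b), m < m' →
      (F m hm).1 = (F m' hm').1 → m / b ≠ m' / b := by
    intro m m' hm hm' hlt heq hdiv
    have h2 : m + 1 < n := by omega
    have h1' : m' < n := by omega
    have ha1 := hrc1 m hm h2
    have ha2 := hrc m' hm' h1'
    have hmo : rowCount (l.get ⟨m + 1, h2⟩) (F m hm).1 ≤
        rowCount (l.get ⟨m', h1'⟩) (F m hm).1 :=
      hrmono (F m hm).1 (m + 1) m' (by omega) h1'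
    rw [ha1] at hmo
    rw [heq] at hmo
    rw [ha2] at hmo
    omega
  -- the cell map
  set φ : Fin (a * b) → Fin (a * b) :=
    (fun m => rowIdx a b (F m.val m.isLt).1 (F m.val m.isLt).2) with hφ
  have hφinj : Function.Injective φ := by
    intro m m' h
    obtain ⟨e1, e2⟩ := rowIdx_inj ha h
    have e3 : F m.val m.isLt = F m'.val m'.isLt := Prod.ext e1 e2
    rcases Nat.lt_trichotomy m.val m'.val with hlt | heqv | hgt
    · exact absurd e3 (hFne _ _ _ _ hlt)
    · exact Fin.ext heqv
    · exact absurd e3.symm (hFne _ _ _ _ hgt)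
  have hφsurj : Function.Surjective φ := Finite.injective_iff_surjective.mp hφinj
  -- characterization of P
  have hPiff : ∀ p : Fin (a * b) × Fin (a * b), p ∈ P ↔ p.1 = φ p.2 := by
    intro p
    rw [hP p]
    constructor
    · rintro ⟨i, h, j, k, hf, ht, hp1, hp2⟩
      have hiv : i < n := by omega
      have hmci := hmc (i + 1) h
      rw [← hp2] at hmci
      have hival : i = p.2.val := by omega
      subst hival
      have him : p.2.val < a * b := p.2.isLt
      have e : ((j, k) : Fin b × Fin a) = F p.2.val him := huniq p.2.val him hiv h j k hf ht
      have ej : j = (F p.2.val him).1 := congrArg Prod.fst e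
      have ek : k = (F p.2.val him).2 := congrArg Prod.snd e
      rw [hp1, ej, ek]
    · intro hp1
      have hpm : p.2.val < a * b := p.2.isLt
      have h2 : p.2.val + 1 < n := by omega
      refine ⟨p.2.val, h2, (F p.2.val hpm).1, (F p.2.val hpm).2, hF1 _ _, hF2 _ _, ?_, ?_⟩
      · exact hp1
      · rw [hmc (p.2.val + 1) h2]
  constructor
  · refine ⟨?_, ?_, ?_⟩
    -- rows
    · intro r
      obtain ⟨m0, hm0⟩ := hφsurj r
      rw [Finset.card_eq_one]
      refine ⟨(r, m0), ?_⟩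
      ext p
      simp only [Finset.mem_filter, Finset.mem_singleton, hPiff p]
      constructor
      · rintro ⟨h1, h2⟩
        have : φ p.2 = φ m0 := by rw [← h1, h2, hm0]
        have e := hφinj this
        rw [Prod.ext_iff]
        exact ⟨h2, e⟩
      · intro h
        subst h
        exact ⟨hm0.symm, rfl⟩
    -- columns
    · intro c
      rw [Finset.card_eq_one]
      refine ⟨(φ c, c), ?_⟩
      ext p
      simp only [Finset.mem_filter, Finset.mem_singleton, hPiff p]
      constructor
      · rintro ⟨h1, h2⟩
        rw [Prod.ext_iff]
        exact ⟨by rw [h1, h2], h2⟩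
      · intro h
        subst h
        exact ⟨rfl, rfl⟩
    -- blocks
    · intro i jb
      have hΨlt : ∀ m : Fin (a * b), m.val / b < a := by
        intro m
        have := m.isLt
        exact Nat.div_lt_iff_lt_mul hb |>.mpr (by omega)
      set Ψ : Fin (a * b) → Fin b × Fin a :=
        (fun m => ((F m.val m.isLt).1, ⟨m.val / b, hΨlt m⟩)) with hΨ
      have hΨinj : Function.Injective Ψ := by
        intro m m' h
        rw [Prod.ext_iff] at h
        obtain ⟨e1, e2⟩ := h
        have e2' : m.val / b = m'.val / b := congrArg Fin.val e2
        rcases Nat.lt_trichotomy m.val m'.val with hlt | heqv | hgt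
        · exact absurd e2' (hkey _ _ _ _ hlt e1)
        · exact Fin.ext heqv
        · exact absurd e2'.symm (hkey _ _ _ _ hgt e1.symm)
      have hΨbij : Function.Bijective Ψ := by
        rw [Fintype.bijective_iff_injective_and_card]
        refine ⟨hΨinj, ?_⟩
        simp [Nat.mul_comm a b]
      obtain ⟨m0, hm0⟩ := hΨbij.2 (i, jb)
      rw [Finset.card_eq_one]
      refine ⟨(φ m0, m0), ?_⟩
      ext p
      simp only [Finset.mem_filter, Finset.mem_singleton, hPiff p]
      have hdiv : ∀ m : Fin (a * b), (φ m).val / a = (F m.val m.isLt).1.val := by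
        intro m
        rw [hφ]
        exact rowIdx_val_div ha _ _
      constructor
      · rintro ⟨h1, h2, h3⟩
        have hv1 : (F p.2.val p.2.isLt).1 = i := by
          apply Fin.ext
          rw [← hdiv p.2, ← h1]
          exact h2
        have hv2 : (⟨p.2.val / b, hΨlt p.2⟩ : Fin a) = jb := Fin.ext h3
        have : Ψ p.2 = Ψ m0 := by
          rw [hm0, hΨ]
          exact Prod.ext hv1 hv2
        have e := hΨinj this
        rw [Prod.ext_iff]
        exact ⟨by rw [h1, e], e⟩
      · intro h
        subst h
        have hm0' : (F m0.val m0.isLt).1 = i ∧ m0.val / b = jb.val := by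
          rw [hΨ] at hm0
          rw [Prod.ext_iff] at hm0
          exact ⟨hm0.1, congrArg Fin.val hm0.2⟩
        refine ⟨rfl, ?_, hm0'.2⟩
        rw [hdiv m0, hm0'.1]
  -- membership in S
  · intro p hp
    have hpm : p.2.val < a * b := p.2.isLt
    have h1 : p.2.val < n := by omega
    have h2 : p.2.val + 1 < n := by omega
    obtain ⟨_, _, j0, k0, c, hA, hB, hoth, hc, hS0⟩ := hedge p.2.val h1 h2
    have e : ((j0, k0) : Fin b × Fin a) = F p.2.val hpm := huniq p.2.val hpm h1 h2 j0 k0 hA hB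
    have hmcp := hmc (p.2.val + 1) h2
    have hc2 : c = p.2 := by
      apply Fin.ext
      omega
    have hp1 : p.1 = φ p.2 := (hPiff p).mp hp
    have ej : j0 = (F p.2.val hpm).1 := congrArg Prod.fst e
    have ek : k0 = (F p.2.val hpm).2 := congrArg Prod.snd e
    have hpe : p = (rowIdx a b j0 k0, c) := by
      rw [Prod.ext_iff]
      constructor
      · rw [hp1, ej, ek]
      · rw [hc2]
    rw [hpe]
    exact hS0
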